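/- Define J(A,v,w) = (AJ₀, -J₀v, -J₀w) and E(A,v,w) = (AE₀, E₀v, -E₀w) on sl(2n+1,ℝ), with J₀ = [[0,-I_n],[I_n,0]] and E₀ = [[I_n,0],[0,-I_n]]. Then {J,E} is a complex product structure: J² = -Id, E² = Id, JE = -EJ, J is integrable, and the ±1-eigenspaces of E are Lie subalgebras of sl(2n+1,ℝ). -/

import Mathlib

open Matrix

namespace Stmt9

/-- The identification of `gl(m,ℝ) ⊕ a ⊕ b` with matrices in `sl(m+1,ℝ)`:
`(A, v, w) ↦ [[A, w], [vᵗ, -tr A]]`. -/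
def Phi {ι : Type} [Fintype ι] (A : Matrix ι ι ℝ) (v w : ι → ℝ) :
    Matrix (ι ⊕ Unit) (ι ⊕ Unit) ℝ :=
  Matrix.fromBlocks A (Matrix.of fun i (_ : Unit) => w i)
    (Matrix.of fun (_ : Unit) j => v j) (Matrix.of fun _ _ => -A.trace)

/-- `J₀ = [[0,-Iₙ],[Iₙ,0]]`. -/
def J0 (n : ℕ) : Matrix (Fin n ⊕ Fin n) (Fin n ⊕ Fin n) ℝ :=
  Matrix.fromBlocks 0 (-1) 1 0

/-- `E₀ = [[Iₙ,0],[0,-Iₙ]]`. -/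
def E0 (n : ℕ) : Matrix (Fin n ⊕ Fin n) (Fin n ⊕ Fin n) ℝ :=
  Matrix.fromBlocks 1 0 0 (-1)

set_option linter.unusedSectionVars false
set_option maxHeartbeats 1000000

section PhiLemmas
variable {ι : Type} [Fintype ι] [DecidableEq ι]

lemma Phi_inj {A A' : Matrix ι ι ℝ} {v w v' w' : ι → ℝ} (h : Phi A v w = Phi A' v' w') :
    A = A' ∧ v = v' ∧ w = w' := by
  refine ⟨?_, ?_, ?_⟩
  · ext i j; simpa [Phi] using congrFun (congrFun h (Sum.inl i)) (Sum.inl j)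
  · ext j; simpa [Phi] using congrFun (congrFun h (Sum.inr ())) (Sum.inl j)
  · ext i; simpa [Phi] using congrFun (congrFun h (Sum.inl i)) (Sum.inr ())

lemma Phi_congr {A A' : Matrix ι ι ℝ} {v w v' w' : ι → ℝ} (hA : A = A') (hv : v = v')
    (hw : w = w') : Phi A v w = Phi A' v' w' := by rw [hA, hv, hw]

lemma Phi_neg (A : Matrix ι ι ℝ) (v w : ι → ℝ) : Phi (-A) (-v) (-w) = -Phi A v w := by
  ext (i|i) (j|j) <;> simp [Phi]

lemma Phi_add (A A' : Matrix ι ι ℝ) (v w v' w' : ι → ℝ) :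
    Phi (A + A') (v + v') (w + w') = Phi A v w + Phi A' v' w' := by
  ext (i|i) (j|j) <;> simp [Phi] <;> ring

lemma lie_Phi (A A' : Matrix ι ι ℝ) (v w v' w' : ι → ℝ) :
    ⁅Phi A v w, Phi A' v' w'⁆ =
      Phi (A * A' - A' * A + vecMulVec w v' - vecMulVec w' v)
        (A'ᵀ *ᵥ v - Aᵀ *ᵥ v' + A'.trace • v - A.trace • v')
        (A *ᵥ w' - A' *ᵥ w + A.trace • w' - A'.trace • w) := by
  have h1 : ∑ x : ι, ∑ y : ι, A y y * A' x x = ∑ x : ι, ∑ y : ι, A x x * A' y y := by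
    rw [Finset.sum_comm]
  have h2 : ∑ x : ι, ∑ y : ι, A x y * A' y x = ∑ x : ι, ∑ y : ι, A y x * A' x y := by
    rw [Finset.sum_comm]
  ext (i|i) (j|j) <;>
    simp [Ring.lie_def, Phi, mul_apply, Fintype.sum_sum_type, vecMulVec_apply, mulVec,
      dotProduct, trace, diag, Matrix.sub_apply, Matrix.add_apply, smul_eq_mul, Finset.sum_sub_distrib,
      Finset.sum_add_distrib, Finset.mul_sum, Finset.sum_mul]
  · simp_rw [mul_comm]; ring
  · simp_rw [mul_comm]; ring
  · simp_rw [mul_comm]; ring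
  · simp_rw [mul_comm]; rw [h1, h2]; ring

lemma vecMulVec_negl (a b : ι → ℝ) : vecMulVec (-a) b = -vecMulVec a b := by
  ext i j; simp [vecMulVec_apply]

lemma vecMulVec_negr (a b : ι → ℝ) : vecMulVec a (-b) = -vecMulVec a b := by
  ext i j; simp [vecMulVec_apply]

lemma vecMulVec_mul (w v : ι → ℝ) (M : Matrix ι ι ℝ) :
    vecMulVec w v * M = vecMulVec w (Mᵀ *ᵥ v) := by
  ext i j
  simp only [mul_apply, vecMulVec_apply, mulVec, dotProduct, Finset.mul_sum, transpose_apply]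
  exact Finset.sum_congr rfl fun k _ => by ring

end PhiLemmas

variable {n : ℕ}

lemma J0_sq : J0 n * J0 n = -1 := by
  ext (i|i) (j|j) <;>
    simp [J0, mul_apply, Fintype.sum_sum_type, fromBlocks, one_apply, Finset.sum_ite_eq']

lemma E0_sq : E0 n * E0 n = 1 := by
  ext (i|i) (j|j) <;>
    simp [E0, mul_apply, Fintype.sum_sum_type, fromBlocks, one_apply, Finset.sum_ite_eq']

lemma E0_J0 : E0 n * J0 n = -(J0 n * E0 n) := by
  ext (i|i) (j|j) <;>
    simp [E0, J0, mul_apply, Fintype.sum_sum_type, fromBlocks, one_apply, Finset.sum_ite_eq']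

lemma J0_T : (J0 n)ᵀ = -J0 n := by
  ext (i|i) (j|j) <;> simp [J0, fromBlocks, one_apply] <;> exact (if_congr eq_comm rfl rfl)

lemma E0_T : (E0 n)ᵀ = E0 n := by
  ext (i|i) (j|j) <;> simp [E0, fromBlocks, one_apply] <;> exact (if_congr eq_comm rfl rfl)

lemma mul_J0_J0 (M : Matrix (Fin n ⊕ Fin n) (Fin n ⊕ Fin n) ℝ) : M * J0 n * J0 n = -M := by
  rw [mul_assoc, J0_sq, mul_neg_one]

lemma J0_J0_vec (x : Fin n ⊕ Fin n → ℝ) : J0 n *ᵥ (J0 n *ᵥ x) = -x := by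
  rw [mulVec_mulVec, J0_sq, neg_mulVec, one_mulVec]

lemma E0_E0_vec (x : Fin n ⊕ Fin n → ℝ) : E0 n *ᵥ (E0 n *ᵥ x) = x := by
  rw [mulVec_mulVec, E0_sq, one_mulVec]


/-- The maps `J(A,v,w) = (AJ₀, -J₀v, -J₀w)` and `E(A,v,w) = (AE₀, E₀v, -E₀w)`
on `sl(2n+1,ℝ)` form a complex product structure: `J² = -Id`, `E² = Id`, `JE = -EJ`,
`J` is integrable, and the `±1`-eigenspaces of `E` are Lie subalgebras. -/
theorem stmt9 (n : ℕ)
    (J E : Matrix ((Fin n ⊕ Fin n) ⊕ Unit) ((Fin n ⊕ Fin n) ⊕ Unit) ℝ →ₗ[ℝ]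
      Matrix ((Fin n ⊕ Fin n) ⊕ Unit) ((Fin n ⊕ Fin n) ⊕ Unit) ℝ)
    (hJ : ∀ (A : Matrix (Fin n ⊕ Fin n) (Fin n ⊕ Fin n) ℝ) (v w : Fin n ⊕ Fin n → ℝ),
      J (Phi A v w) = Phi (A * J0 n) (-(J0 n *ᵥ v)) (-(J0 n *ᵥ w)))
    (hE : ∀ (A : Matrix (Fin n ⊕ Fin n) (Fin n ⊕ Fin n) ℝ) (v w : Fin n ⊕ Fin n → ℝ),
      E (Phi A v w) = Phi (A * E0 n) (E0 n *ᵥ v) (-(E0 n *ᵥ w))) :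
    (∀ (A : Matrix (Fin n ⊕ Fin n) (Fin n ⊕ Fin n) ℝ) (v w : Fin n ⊕ Fin n → ℝ),
      J (J (Phi A v w)) = -(Phi A v w)) ∧
    (∀ (A : Matrix (Fin n ⊕ Fin n) (Fin n ⊕ Fin n) ℝ) (v w : Fin n ⊕ Fin n → ℝ),
      E (E (Phi A v w)) = Phi A v w) ∧
    (∀ (A : Matrix (Fin n ⊕ Fin n) (Fin n ⊕ Fin n) ℝ) (v w : Fin n ⊕ Fin n → ℝ),
      J (E (Phi A v w)) = -(E (J (Phi A v w)))) ∧
    (∀ (A A' : Matrix (Fin n ⊕ Fin n) (Fin n ⊕ Fin n) ℝ)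
        (v w v' w' : Fin n ⊕ Fin n → ℝ),
      J ⁅Phi A v w, Phi A' v' w'⁆ =
        ⁅J (Phi A v w), Phi A' v' w'⁆ + ⁅Phi A v w, J (Phi A' v' w')⁆ +
          J ⁅J (Phi A v w), J (Phi A' v' w')⁆) ∧
    (∀ (A A' : Matrix (Fin n ⊕ Fin n) (Fin n ⊕ Fin n) ℝ)
        (v w v' w' : Fin n ⊕ Fin n → ℝ),
      E (Phi A v w) = Phi A v w → E (Phi A' v' w') = Phi A' v' w' →
        E ⁅Phi A v w, Phi A' v' w'⁆ = ⁅Phi A v w, Phi A' v' w'⁆) ∧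
    (∀ (A A' : Matrix (Fin n ⊕ Fin n) (Fin n ⊕ Fin n) ℝ)
        (v w v' w' : Fin n ⊕ Fin n → ℝ),
      E (Phi A v w) = -(Phi A v w) → E (Phi A' v' w') = -(Phi A' v' w') →
        E ⁅Phi A v w, Phi A' v' w'⁆ = -⁅Phi A v w, Phi A' v' w'⁆) := by
  refine ⟨?_, ?_, ?_, ?_, ?_, ?_⟩
  · intro A v w
    rw [hJ, hJ, ← Phi_neg]
    refine Phi_congr ?_ ?_ ?_
    · rw [mul_assoc, J0_sq, mul_neg_one]
    · simp [mulVec_neg, mulVec_mulVec, J0_sq, neg_mulVec, one_mulVec]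
    · simp [mulVec_neg, mulVec_mulVec, J0_sq, neg_mulVec, one_mulVec]
  · intro A v w
    rw [hE, hE]
    refine Phi_congr ?_ ?_ ?_
    · rw [mul_assoc, E0_sq, mul_one]
    · exact E0_E0_vec v
    · simp [mulVec_neg, mulVec_mulVec, E0_sq, one_mulVec]
  · intro A v w
    rw [hE, hJ, hJ, hE, ← Phi_neg]
    refine Phi_congr ?_ ?_ ?_
    · rw [mul_assoc, mul_assoc, E0_J0]; simp [mul_neg]
    · simp [mulVec_neg, mulVec_mulVec, E0_J0, neg_mulVec]
    · simp [mulVec_neg, mulVec_mulVec, E0_J0, neg_mulVec]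
  · intro A A' v w v' w'
    simp only [lie_Phi, hJ]
    rw [← Phi_add, ← Phi_add]
    refine Phi_congr ?_ ?_ ?_
    · simp only [sub_mul, add_mul, neg_mul, vecMulVec_mul, vecMulVec_negl, vecMulVec_negr,
        J0_T, neg_mulVec, mulVec_neg, mulVec_mulVec, J0_J0_vec, mul_assoc, J0_sq,
        mul_neg, neg_neg, mul_neg_one, mul_one, one_mulVec]
      abel
    · simp only [transpose_mul, J0_T, mulVec_sub, mulVec_add, mulVec_smul, mulVec_mulVec,
        neg_mulVec, mulVec_neg, mul_neg, neg_mul, neg_neg, smul_neg, neg_sub, neg_add,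
        ← mul_assoc, J0_sq, mul_J0_J0, mul_neg_one, mul_one, one_mul, neg_one_mul, one_mulVec]
      abel
    · simp only [transpose_mul, J0_T, mulVec_sub, mulVec_add, mulVec_smul, mulVec_mulVec,
        neg_mulVec, mulVec_neg, mul_neg, neg_mul, neg_neg, smul_neg, neg_sub, neg_add,
        ← mul_assoc, J0_sq, mul_J0_J0, mul_neg_one, mul_one, one_mul, neg_one_mul, one_mulVec]
      abel
  · intro A A' v w v' w' h h'
    rw [hE] at h h'
    obtain ⟨hA, hv, hw⟩ := Phi_inj h
    obtain ⟨hA', hv', hw'⟩ := Phi_inj h'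
    have hEw : E0 n *ᵥ w = -w := neg_eq_iff_eq_neg.mp hw
    have hEw' : E0 n *ᵥ w' = -w' := neg_eq_iff_eq_neg.mp hw'
    have hAT : E0 n * A'ᵀ = A'ᵀ := by rw [← E0_T, ← transpose_mul, hA']
    have hAT2 : E0 n * Aᵀ = Aᵀ := by rw [← E0_T, ← transpose_mul, hA]
    have h0 : A *ᵥ w' = 0 := by
      have h1 : A *ᵥ w' = -(A *ᵥ w') := by
        conv_lhs => rw [← hA, ← mulVec_mulVec, hEw', mulVec_neg]
      exact self_eq_neg.mp h1
    have h0' : A' *ᵥ w = 0 := by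
      have h1 : A' *ᵥ w = -(A' *ᵥ w) := by
        conv_lhs => rw [← hA', ← mulVec_mulVec, hEw, mulVec_neg]
      exact self_eq_neg.mp h1
    rw [lie_Phi, hE]
    refine Phi_congr ?_ ?_ ?_
    · simp only [sub_mul, add_mul, mul_assoc, hA, hA', vecMulVec_mul, E0_T, hv, hv']
    · simp only [mulVec_sub, mulVec_add, mulVec_smul, mulVec_mulVec, hAT, hAT2, hv, hv']
    · simp only [mulVec_sub, mulVec_add, mulVec_smul, h0, h0', hEw, hEw', smul_neg,
        mulVec_zero]
      abel
  · intro A A' v w v' w' h h'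
    rw [hE, ← Phi_neg] at h h'
    obtain ⟨hA, hv, hw⟩ := Phi_inj h
    obtain ⟨hA', hv', hw'⟩ := Phi_inj h'
    have hEw : E0 n *ᵥ w = w := by have := neg_eq_iff_eq_neg.mp hw; simpa using this
    have hEw' : E0 n *ᵥ w' = w' := by have := neg_eq_iff_eq_neg.mp hw'; simpa using this
    have hAT : E0 n * A'ᵀ = -A'ᵀ := by
      rw [← E0_T, ← transpose_mul, hA', transpose_neg]
    have hAT2 : E0 n * Aᵀ = -Aᵀ := by
      rw [← E0_T, ← transpose_mul, hA, transpose_neg]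
    have h0 : A *ᵥ w' = 0 := by
      have h1 : A *ᵥ w' = -(A *ᵥ w') := by
        conv_lhs => rw [← hEw', mulVec_mulVec, hA, neg_mulVec]
      exact self_eq_neg.mp h1
    have h0' : A' *ᵥ w = 0 := by
      have h1 : A' *ᵥ w = -(A' *ᵥ w) := by
        conv_lhs => rw [← hEw, mulVec_mulVec, hA', neg_mulVec]
      exact self_eq_neg.mp h1
    rw [lie_Phi, hE, ← Phi_neg]
    refine Phi_congr ?_ ?_ ?_
    · simp only [sub_mul, add_mul, mul_assoc, hA, hA', vecMulVec_mul, E0_T, hv, hv',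
        mul_neg, vecMulVec_negr, neg_sub, neg_add]
      abel
    · simp only [mulVec_sub, mulVec_add, mulVec_smul, mulVec_mulVec, hAT, hAT2, hv, hv',
        neg_mulVec, smul_neg, neg_sub, neg_add]
      abel
    · simp only [mulVec_sub, mulVec_add, mulVec_smul, h0, h0', hEw, hEw', smul_neg,
        mulVec_zero]
end Stmt9
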